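/- Let V be a real Hilbert space, N a positive natural number, v₁, …, v_N ∈ V with invertible Gram matrix M (Mᵢⱼ = ⟨vⱼ, vᵢ⟩), and A : V → V a map. Define J ∈ ℝᴺˣᴺ by Jᵢⱼ := ⟨A vⱼ, vᵢ⟩ and Ĵ := M⁻¹ J M⁻¹. Let F : ℝᴺ → ℝ be differentiable at a ∈ ℝᴺ and set δF := Σⱼ (M⁻¹ ∇F(a))ⱼ vⱼ ∈ V. If ⟨A δF, vᵢ⟩ = 0 for every 1 ≤ i ≤ N (in particular, if A δF = 0, i.e. δF lies in the kernel of A), then Ĵ ∇F(a) = 0, so ∇F(a) lies in the kernel of the discrete Poisson matrix Ĵ. (Thus discretisations of continuous Casimirs whose gradients lie in the approximation space are discrete Casimirs.) -/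

import Mathlib

open RealInnerProductSpace Matrix

/-- Let `v₁, …, v_N ∈ V` have invertible Gram matrix `M`, let `A` be a linear
operator on `V` (the Poisson operator), `Jᵢⱼ := ⟪A vⱼ, vᵢ⟫` and `Ĵ := M⁻¹ J M⁻¹`. Let `F` be
differentiable at `a` and `δF := ∑ⱼ (M⁻¹ ∇F(a))ⱼ vⱼ`. If `⟪A δF, vᵢ⟫ = 0` for every `i`
(in particular if `δF` lies in the kernel of `A`), then `Ĵ ∇F(a) = 0`: discretisations of
continuous Casimirs whose gradients lie in the approximation space are discrete Casimirs. -/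
theorem stmt_9 {V : Type*} [NormedAddCommGroup V] [InnerProductSpace ℝ V]
    (N : ℕ) (hN : 0 < N) (v : Fin N → V)
    (M : Matrix (Fin N) (Fin N) ℝ) (hM : ∀ i j, M i j = ⟪v j, v i⟫) (hMu : IsUnit M)
    (A : V →ₗ[ℝ] V)
    (J : Matrix (Fin N) (Fin N) ℝ) (hJ : ∀ i j, J i j = ⟪A (v j), v i⟫)
    (F : EuclideanSpace ℝ (Fin N) → ℝ) (a : EuclideanSpace ℝ (Fin N))
    (hF : DifferentiableAt ℝ F a)
    (δF : V)
    (hδF : δF = ∑ j, M⁻¹.mulVec (gradient F a : EuclideanSpace ℝ (Fin N)) j • v j)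
    (hker : ∀ i, ⟪A δF, v i⟫ = 0) :
    (M⁻¹ * J * M⁻¹).mulVec (gradient F a : EuclideanSpace ℝ (Fin N)) = 0 := by
  set g : Fin N → ℝ := ⇑(gradient F a : EuclideanSpace ℝ (Fin N)) with hg
  have key : J.mulVec (M⁻¹.mulVec g) = 0 := by
    funext i
    have : (J.mulVec (M⁻¹.mulVec g)) i = ⟪A δF, v i⟫ := by
      rw [hδF]
      simp only [map_sum, _root_.map_smul, sum_inner, real_inner_smul_left]
      simp only [Matrix.mulVec, dotProduct, hJ]
      exact Finset.sum_congr rfl fun j _ => mul_comm _ _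
    rw [this, hker i]
    rfl
  calc (M⁻¹ * J * M⁻¹).mulVec g = M⁻¹.mulVec (J.mulVec (M⁻¹.mulVec g)) := by
        rw [← Matrix.mulVec_mulVec, ← Matrix.mulVec_mulVec]
    _ = 0 := by rw [key, Matrix.mulVec_zero]
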